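/- Let F be a field and let ρ : H → GL(n, F) be any group homomorphism from the integral Heisenberg group H (upper unitriangular 3×3 integer matrices) to GL(n, F). Then the image under ρ of the central generator z (the unitriangular matrix with a single 1 in the top-right corner) has all eigenvalues (over the algebraic closure of F) equal to roots of unity. -/

import Mathlib

/-- The integral Heisenberg group: `⟨a, b, c⟩` corresponds to the upper
unitriangular matrix `[[1, a, c], [0, 1, b], [0, 0, 1]]`. -/
@[ext]
structure Heisenberg where
  a : ℤ
  b : ℤ
  c : ℤ

namespace Heisenberg

instance : Mul Heisenberg := ⟨fun p q => ⟨p.a + q.a, p.b + q.b, p.c + q.c + p.a * q.b⟩⟩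
instance : One Heisenberg := ⟨⟨0, 0, 0⟩⟩
instance : Inv Heisenberg := ⟨fun p => ⟨-p.a, -p.b, -p.c + p.a * p.b⟩⟩

@[simp] lemma mul_a (p q : Heisenberg) : (p * q).a = p.a + q.a := rfl
@[simp] lemma mul_b (p q : Heisenberg) : (p * q).b = p.b + q.b := rfl
@[simp] lemma mul_c (p q : Heisenberg) : (p * q).c = p.c + q.c + p.a * q.b := rfl
@[simp] lemma one_a : (1 : Heisenberg).a = 0 := rfl
@[simp] lemma one_b : (1 : Heisenberg).b = 0 := rfl
@[simp] lemma one_c : (1 : Heisenberg).c = 0 := rfl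
@[simp] lemma inv_a (p : Heisenberg) : p⁻¹.a = -p.a := rfl
@[simp] lemma inv_b (p : Heisenberg) : p⁻¹.b = -p.b := rfl
@[simp] lemma inv_c (p : Heisenberg) : p⁻¹.c = -p.c + p.a * p.b := rfl

instance : Group Heisenberg where
  mul_assoc p q r := by ext <;> simp <;> ring
  one_mul p := by ext <;> simp
  mul_one p := by ext <;> simp
  inv_mul_cancel p := by ext <;> simp <;> ring

/-- The central generator `z`, with a single `1` in the top-right corner. -/
def z : Heisenberg := ⟨0, 0, 1⟩

end Heisenberg


open Polynomial Matrix Module in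
lemma charpoly_eval_aux {K : Type*} [Field K] {m : Type*} [Fintype m] [DecidableEq m]
    (A : Matrix m m K) (x : K) : A.charpoly.eval x = (x • (1 : Matrix m m K) - A).det := by
  have : A.charpoly.eval x = (Polynomial.evalRingHom x) (Matrix.charmatrix A).det := rfl
  rw [this, RingHom.map_det]
  congr 1
  ext i j
  by_cases h : i = j
  · subst h
    simp [Matrix.charmatrix_apply_eq, Matrix.one_apply]
  · simp [Matrix.charmatrix_apply_ne _ _ _ h, Matrix.one_apply_ne h]

open Polynomial Matrix Module in
lemma det_smul_one_add_nilpotent {K : Type*} [Field K] {m : Type*} [Fintype m] [DecidableEq m]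
    {A : Matrix m m K} (hA : IsNilpotent A) (x : K) :
    (x • (1 : Matrix m m K) + A).det = x ^ Fintype.card m := by
  have hc : A.charpoly = X ^ Fintype.card m := by
    have h0 := (Matrix.isNilpotent_charpoly_sub_pow_of_isNilpotent hA).eq_zero
    rwa [sub_eq_zero] at h0
  have h1 : x • (1 : Matrix m m K) + A = -((-x) • (1 : Matrix m m K) - A) := by
    rw [neg_sub, neg_smul, sub_neg_eq_add, add_comm]
  rw [h1, Matrix.det_neg, ← charpoly_eval_aux, hc]
  simp [← mul_pow]

set_option maxHeartbeats 2000000 in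
/-- Any finite-dimensional linear representation of the integral Heisenberg group
maps the central generator `z` to a matrix all of whose eigenvalues, over the
algebraic closure, are roots of unity. -/
theorem heisenberg_center_virtually_unipotent (F : Type) [Field F] (n : ℕ)
    (ρ : Heisenberg →* GL (Fin n) F) (μ : AlgebraicClosure F)
    (hμ : (((ρ Heisenberg.z : Matrix (Fin n) (Fin n) F)).map
      (algebraMap F (AlgebraicClosure F))).charpoly.IsRoot μ) :
    ∃ m : ℕ, 0 < m ∧ μ ^ m = 1 := by
  classical
  let K := AlgebraicClosure F
  let φ : Matrix (Fin n) (Fin n) F →+* Matrix (Fin n) (Fin n) K := (algebraMap F K).mapMatrix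
  let M : Heisenberg → Matrix (Fin n) (Fin n) K := fun g => φ (ρ g : Matrix (Fin n) (Fin n) F)
  have hM : ∀ g h : Heisenberg, M (g * h) = M g * M h := by
    intro g h
    simp only [M, map_mul, Units.val_mul]
  have hM1 : M 1 = 1 := by simp [M]
  let e : Heisenberg → Module.End K (Fin n → K) := fun g => Matrix.toLinAlgEquiv' (M g)
  have he : ∀ g h : Heisenberg, e (g * h) = e g * e h := by
    intro g h; simp only [e, hM, map_mul]
  have he1 : e 1 = 1 := by simp only [e, hM1, map_one]
  -- μ is an eigenvalue of e z
  have hdet0 : (μ • (1 : Matrix (Fin n) (Fin n) K) - M Heisenberg.z).det = 0 := by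
    rw [← charpoly_eval_aux]
    exact hμ
  have hspec : μ ∈ spectrum K (M Heisenberg.z) := by
    rw [spectrum.mem_iff]
    intro hu
    rw [Matrix.isUnit_iff_isUnit_det] at hu
    rw [Algebra.algebraMap_eq_smul_one, hdet0] at hu
    exact hu.ne_zero rfl
  have heig : Module.End.HasEigenvalue (e Heisenberg.z) μ := by
    rw [Module.End.hasEigenvalue_iff_mem_spectrum]
    rwa [AlgEquiv.spectrum_eq Matrix.toLinAlgEquiv' (M Heisenberg.z)]
  set V := (e Heisenberg.z).maxGenEigenspace μ with hV
  -- every e g preserves V, since z is central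
  have hcomm : ∀ g : Heisenberg, Commute (e Heisenberg.z) (e g) := by
    intro g
    have hzg : Heisenberg.z * g = g * Heisenberg.z := by
      ext <;> simp [Heisenberg.z] <;> ring
    show e Heisenberg.z * e g = e g * e Heisenberg.z
    rw [← he, ← he, hzg]
  have hmaps : ∀ g : Heisenberg, Set.MapsTo (e g) V V := fun g =>
    Module.End.mapsTo_maxGenEigenspace_of_comm (hcomm g) μ
  let r : Heisenberg → Module.End K V := fun g => (e g).restrict (hmaps g)
  have hr : ∀ g h : Heisenberg, r (g * h) = r g * r h := by
    intro g h
    refine LinearMap.ext fun v => Subtype.ext ?_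
    simp [r, LinearMap.restrict_apply, LinearMap.restrict_coe_apply, he, Module.End.mul_apply]
    rfl
  have hr1 : r 1 = 1 := by
    refine LinearMap.ext fun v => Subtype.ext ?_
    simp [r, LinearMap.restrict_apply, he1]
  have hdet_ne : ∀ g : Heisenberg, LinearMap.det (r g) ≠ 0 := by
    intro g
    have h1 : LinearMap.det (r g) * LinearMap.det (r g⁻¹) = 1 := by
      rw [← map_mul, ← hr, mul_inv_cancel, hr1, map_one]
    intro h0
    rw [h0, zero_mul] at h1
    exact zero_ne_one h1
  -- the key relation x y x⁻¹ = y z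
  have hxyx : ((⟨1,0,0⟩ : Heisenberg) * ⟨0,1,0⟩ * (⟨1,0,0⟩ : Heisenberg)⁻¹)
      = (⟨0,1,0⟩ : Heisenberg) * Heisenberg.z := by
    ext <;> simp [Heisenberg.z]
  have key : LinearMap.det (r ⟨1,0,0⟩) * LinearMap.det (r ⟨0,1,0⟩)
        * LinearMap.det (r (⟨1,0,0⟩ : Heisenberg)⁻¹)
      = LinearMap.det (r ⟨0,1,0⟩) * LinearMap.det (r Heisenberg.z) := by
    rw [← map_mul, ← map_mul, ← hr, ← hr, ← map_mul, ← hr, hxyx]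
  have hxinv : LinearMap.det (r ⟨1,0,0⟩) * LinearMap.det (r (⟨1,0,0⟩ : Heisenberg)⁻¹) = 1 := by
    rw [← map_mul, ← hr, mul_inv_cancel, hr1, map_one]
  have hdz : LinearMap.det (r Heisenberg.z) = 1 := by
    apply mul_left_cancel₀ (hdet_ne ⟨0,1,0⟩)
    rw [mul_one, ← key]
    calc LinearMap.det (r ⟨1,0,0⟩) * LinearMap.det (r ⟨0,1,0⟩)
          * LinearMap.det (r (⟨1,0,0⟩ : Heisenberg)⁻¹)
        = LinearMap.det (r ⟨0,1,0⟩)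
          * (LinearMap.det (r ⟨1,0,0⟩) * LinearMap.det (r (⟨1,0,0⟩ : Heisenberg)⁻¹)) := by ring
      _ = LinearMap.det (r ⟨0,1,0⟩) := by rw [hxinv, mul_one]
  -- the restriction of (e z) to V is μ•1 + nilpotent
  have hnil : IsNilpotent (r Heisenberg.z - algebraMap K (Module.End K V) μ) := by
    have h := Module.End.isNilpotent_restrict_maxGenEigenspace_sub_algebraMap (e Heisenberg.z) μ
    have heq : r Heisenberg.z - algebraMap K (Module.End K V) μ
        = ((e Heisenberg.z) - algebraMap K (Module.End K (Fin n → K)) μ).restrict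
          (Module.End.mapsTo_maxGenEigenspace_of_comm
            (Algebra.mul_sub_algebraMap_commutes (e Heisenberg.z) μ) μ) := by
      refine LinearMap.ext fun v => Subtype.ext ?_
      simp [r, LinearMap.restrict_apply, LinearMap.restrict_coe_apply, LinearMap.sub_apply, Module.algebraMap_end_apply]
      rfl
    rw [heq]
    exact h
  haveI : FiniteDimensional K V := inferInstance
  set d := Module.finrank K V with hd
  let b : Module.Basis (Fin d) K V := Module.finBasis K V
  have hdet_rz : LinearMap.det (r Heisenberg.z) = μ ^ d := by
    let A := LinearMap.toMatrixAlgEquiv b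
    have hA : A (r Heisenberg.z) = LinearMap.toMatrix b b (r Heisenberg.z) := rfl
    rw [← LinearMap.det_toMatrix b, ← hA]
    have hmat : A (r Heisenberg.z)
        = μ • (1 : Matrix (Fin d) (Fin d) K)
          + A (r Heisenberg.z - algebraMap K (Module.End K V) μ) := by
      have h1 : A (r Heisenberg.z - algebraMap K (Module.End K V) μ)
          = A (r Heisenberg.z) - A (algebraMap K (Module.End K V) μ) := map_sub A _ _
      have h2 : A (algebraMap K (Module.End K V) μ)
          = algebraMap K (Matrix (Fin d) (Fin d) K) μ := AlgEquiv.commutes A μ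
      rw [h1, h2, Algebra.algebraMap_eq_smul_one]
      abel
    have hnilm : IsNilpotent (A (r Heisenberg.z - algebraMap K (Module.End K V) μ)) := by
      obtain ⟨k, hk⟩ := hnil
      refine ⟨k, ?_⟩
      have h3 : A (r Heisenberg.z - algebraMap K (Module.End K V) μ) ^ k
          = A ((r Heisenberg.z - algebraMap K (Module.End K V) μ) ^ k) := (map_pow A _ k).symm
      rw [h3, hk, map_zero]
    rw [hmat, det_smul_one_add_nilpotent hnilm, Fintype.card_fin]
  have hVne : V ≠ ⊥ := by
    intro hbot
    apply heig
    refine le_antisymm ?_ bot_le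
    rw [← hbot]
    exact Module.End.genEigenspace_le_maximal (e Heisenberg.z) μ 1
  haveI : Nontrivial V := (Submodule.nontrivial_iff_ne_bot).mpr hVne
  refine ⟨d, Module.finrank_pos, ?_⟩
  rw [← hdet_rz, hdz]
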